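/- Let m ≥ 2k ≥ 2 and let α : {1,…,m} → F be a function to an infinite field (or ℂ). Then the following are equivalent: (1) for every choice of 2k distinct indices i_1, j_1, …, i_k, j_k in {1,…,m}, the product ∏_{s=1}^{k} (α_{i_s} − α_{j_s}) vanishes; (2) there exists a value v such that α_i = v for at least m − k + 1 indices i. -/

import Mathlib

/-- Base locus of the map `C_{m,k}`: for `m ≥ 2k ≥ 2` and `α : {1,…,m} → ℂ`,
all products `∏_{s} (α_{i_s} − α_{j_s})` over `2k` distinct indices vanish
iff some value is taken by at least `m − k + 1` of the coordinates. -/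
theorem base_locus_matching_products (m k : ℕ) (hk : 1 ≤ k) (hm : 2 * k ≤ m)
    (α : Fin m → ℂ) :
    (∀ i j : Fin k → Fin m,
        Function.Injective (Sum.elim i j : Fin k ⊕ Fin k → Fin m) →
        (∏ s, (α (i s) - α (j s))) = 0)
      ↔ ∃ v : ℂ, m - k + 1 ≤ (Finset.univ.filter (fun x : Fin m => α x = v)).card := by
  classical
  constructor
  · intro h
    by_contra hno
    push_neg at hno
    set d := m - k with hd
    have hkd : k ≤ d := by omega
    have hdk : d + k = m := by omega
    set S : Finset ℂ := Finset.univ.image α with hS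
    have hmem : ∀ x, α x ∈ S := fun x => Finset.mem_image_of_mem α (Finset.mem_univ x)
    set β : Fin m → ℕ := fun x => ((S.equivFin ⟨α x, hmem x⟩ : Fin S.card) : ℕ) with hβ
    have hβα : ∀ x y, β x = β y → α x = α y := by
      intro x y hxy
      have h2 := S.equivFin.injective (Fin.val_injective hxy)
      exact congrArg Subtype.val h2
    have hαβ : ∀ x y, α x = α y → β x = β y := by
      intro x y hxy
      simp only [hβ]
      congr 2
      exact Subtype.ext hxy
    set σ := Tuple.sort β with hσdef
    have hmono : Monotone (β ∘ σ) := Tuple.monotone_sort β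
    set i : Fin k → Fin m := fun t => σ ⟨t.val, by have := t.isLt; omega⟩ with hi
    set j : Fin k → Fin m := fun t => σ ⟨t.val + d, by have := t.isLt; omega⟩ with hj
    have hσval : ∀ (p q : Fin m), σ p = σ q → p.val = q.val := fun p q hpq =>
      congrArg Fin.val (σ.injective hpq)
    have hinj : Function.Injective (Sum.elim i j) := by
      rintro (a | a) (b | b) hab <;>
        simp only [Sum.elim_inl, Sum.elim_inr, hi, hj] at hab <;>
        have h2 := hσval _ _ hab <;>
        simp only [] at h2
      · exact congrArg Sum.inl (Fin.ext h2)
      · exact absurd h2 (by have := a.isLt; omega)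
      · exact absurd h2 (by have := b.isLt; omega)
      · exact congrArg Sum.inr (Fin.ext (by omega))
    have hne : ∀ t, α (i t) ≠ α (j t) := by
      intro t hteq
      have hβeq : β (i t) = β (j t) := hαβ _ _ hteq
      set f : Fin (d + 1) → Fin m := fun u =>
        σ ⟨t.val + u.val, by have := t.isLt; have := u.isLt; omega⟩ with hf
      have hfval : ∀ u, α (f u) = α (i t) := by
        intro u
        apply hβα
        have h1 : β (σ ⟨t.val, by have := t.isLt; omega⟩) ≤
            β (σ ⟨t.val + u.val, by have := t.isLt; have := u.isLt; omega⟩) :=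
          hmono (by simp only [Fin.mk_le_mk]; omega)
        have h2 : β (σ ⟨t.val + u.val, by have := t.isLt; have := u.isLt; omega⟩) ≤
            β (σ ⟨t.val + d, by have := t.isLt; omega⟩) :=
          hmono (by simp only [Fin.mk_le_mk]; have := u.isLt; omega)
        have h3 : β (i t) = β (j t) := hβeq
        simp only [hi, hj] at h3
        simp only [hf, hi]
        omega
      have hcard : (Finset.univ : Finset (Fin (d + 1))).card ≤
          (Finset.univ.filter (fun x : Fin m => α x = α (i t))).card := by
        apply Finset.card_le_card_of_injOn f
        · intro u _
          simp only [Finset.mem_coe, Finset.mem_filter, Finset.mem_univ, true_and]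
          exact hfval u
        · intro u _ u' _ huu
          have := hσval _ _ huu
          simp only [] at this
          exact Fin.ext (by omega)
      simp only [Finset.card_univ, Fintype.card_fin] at hcard
      have := hno (α (i t))
      omega
    have h0 := h i j hinj
    rcases Finset.prod_eq_zero_iff.mp h0 with ⟨t, _, ht⟩
    exact hne t (sub_eq_zero.mp ht)
  · rintro ⟨v, hv⟩ i j hinj
    have hex : ∃ t, α (i t) = v ∧ α (j t) = v := by
      by_contra hc
      push_neg at hc
      set f : Fin k → Fin m := fun t => if α (i t) = v then j t else i t with hf
      have hfnot : ∀ t, ¬ α (f t) = v := by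
        intro t
        simp only [hf]
        split
        · next hit => exact hc t hit
        · next hit => exact hit
      have hfinj : Set.InjOn f ↑(Finset.univ : Finset (Fin k)) := by
        intro t _ t' _ htt
        simp only [hf] at htt
        split at htt <;> split at htt
        · exact Sum.inr_injective (hinj (htt : Sum.elim i j (.inr t) = Sum.elim i j (.inr t')))
        · exact absurd
            (hinj (show Sum.elim i j (.inr t) = Sum.elim i j (.inl t') from htt)) (by simp)
        · exact absurd
            (hinj (show Sum.elim i j (.inl t) = Sum.elim i j (.inr t') from htt)) (by simp)
        · exact Sum.inl_injective (hinj (htt : Sum.elim i j (.inl t) = Sum.elim i j (.inl t')))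
      have hle : (Finset.univ : Finset (Fin k)).card ≤
          (Finset.univ.filter (fun x : Fin m => ¬ α x = v)).card := by
        apply Finset.card_le_card_of_injOn f
        · intro t _
          simp only [Finset.mem_coe, Finset.mem_filter, Finset.mem_univ, true_and]
          exact hfnot t
        · exact hfinj
      have hsum := Finset.card_filter_add_card_filter_not
        (s := (Finset.univ : Finset (Fin m))) (p := fun x => α x = v)
      simp only [Finset.card_univ, Fintype.card_fin] at hle hsum
      omega
    rcases hex with ⟨t, ht1, ht2⟩
    apply Finset.prod_eq_zero (Finset.mem_univ t)
    rw [ht1, ht2, sub_self]
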